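/- Let m, n ≥ 1 and let M ∈ ℂ^{m×n} admit a singular value decomposition M = U D Vᴴ, where U ∈ ℂ^{m×m} and V ∈ ℂ^{n×n} are unitary, D ∈ ℝ^{m×n} satisfies D_{ij} = σ_i if i = j and D_{ij} = 0 otherwise, and σ_1 ≥ σ_2 ≥ ⋯ ≥ σ_{min(m,n)} ≥ 0. Let 0 ≤ k ≤ min(m,n). Then for every matrix B ∈ ℂ^{m×n} with rank(B) ≤ k, ‖M − B‖_F² ≥ Σ_{i=k+1}^{min(m,n)} σ_i². In particular, the rank-k truncated SVD M̃ = U D̃ Vᴴ, where D̃ keeps only σ_1,…,σ_k and zeroes the remaining singular values, is a closest rank-k matrix to M in the Frobenius norm. -/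

import Mathlib

open Matrix BigOperators

/-- The Frobenius norm of a complex matrix: `‖M‖_F = sqrt (Σ_{i,j} |M_{ij}|²)`. -/
noncomputable def frobNorm {m n : Type*} [Fintype m] [Fintype n]
    (M : Matrix m n ℂ) : ℝ :=
  Real.sqrt (∑ i, ∑ j, ‖M i j‖ ^ 2)

local notation "⟪" x ", " y "⟫" => @inner ℂ _ _ x y

noncomputable def sumSq {α β : Type*} [Fintype α] [Fintype β] (A : Matrix α β ℂ) : ℝ :=
  ∑ i, ∑ j, ‖A i j‖ ^ 2

lemma frobNorm_eq_sqrt_sumSq {α β : Type*} [Fintype α] [Fintype β] (A : Matrix α β ℂ) :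
    frobNorm A = Real.sqrt (sumSq A) := rfl


lemma sumSq_nonneg {α β : Type*} [Fintype α] [Fintype β] (A : Matrix α β ℂ) : 0 ≤ sumSq A :=
  Finset.sum_nonneg fun _ _ => Finset.sum_nonneg fun _ _ => pow_nonneg (norm_nonneg _) 2

lemma sumSq_eq_re_trace {α β : Type*} [Fintype α] [Fintype β] (A : Matrix α β ℂ) :
    sumSq A = (Matrix.trace (Aᴴ * A)).re := by
  simp only [Matrix.trace, Matrix.mul_apply, Matrix.conjTranspose_apply, Matrix.diag,
    Complex.re_sum, sumSq]
  rw [Finset.sum_comm]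
  refine Finset.sum_congr rfl fun i _ => Finset.sum_congr rfl fun j _ => ?_
  rw [mul_comm, show (star (A j i)) = (starRingEnd ℂ) (A j i) from rfl, Complex.mul_conj]
  simp [Complex.normSq_eq_norm_sq, ← Complex.ofReal_pow]

lemma sumSq_unitary {α β : Type*} [Fintype α] [Fintype β] [DecidableEq α] [DecidableEq β]
    (U : Matrix α α ℂ) (V : Matrix β β ℂ) (hU : Uᴴ * U = 1) (hV : Vᴴ * V = 1)
    (X : Matrix α β ℂ) : sumSq (U * X * Vᴴ) = sumSq X := by
  rw [sumSq_eq_re_trace, sumSq_eq_re_trace]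
  congr 1
  have h1 : (U * X * Vᴴ)ᴴ * (U * X * Vᴴ) = V * (Xᴴ * X) * Vᴴ := by
    simp only [Matrix.conjTranspose_mul, Matrix.conjTranspose_conjTranspose, Matrix.mul_assoc]
    rw [← Matrix.mul_assoc Uᴴ U, hU, Matrix.one_mul]
  rw [h1, Matrix.trace_mul_cycle, ← Matrix.mul_assoc, hV, Matrix.one_mul]

section Proj
variable {E : Type*} [NormedAddCommGroup E] [InnerProductSpace ℂ E]

lemma proj_normSq (S : Submodule ℂ E) [S.HasOrthogonalProjection] [CompleteSpace S]
    {ι : Type*} [Fintype ι] (b : OrthonormalBasis ι ℂ S) (x : E) :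
    ‖(S.orthogonalProjectionOnto x : E)‖ ^ 2 = ∑ l, ‖(⟪(b l : E), x⟫ : ℂ)‖ ^ 2 := by
  have h1 : ‖(S.orthogonalProjectionOnto x : E)‖ = ‖S.orthogonalProjectionOnto x‖ := rfl
  rw [h1, ← b.repr.norm_map (S.orthogonalProjectionOnto x), EuclideanSpace.norm_eq,
    Real.sq_sqrt (by positivity)]
  refine Finset.sum_congr rfl fun l _ => ?_
  rw [b.repr_apply_apply, Submodule.inner_orthogonalProjectionOnto_eq_of_mem_left]

lemma dist_proj_le (S : Submodule ℂ E) [S.HasOrthogonalProjection] (y c : E) (hc : c ∈ S) :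
    ‖y - (S.orthogonalProjectionOnto y : E)‖ ≤ ‖y - c‖ := by
  change ‖y - S.starProjection y‖ ≤ _
  rw [Submodule.starProjection_minimal]
  exact ciInf_le_of_le ⟨0, by rintro a ⟨x, rfl⟩; exact norm_nonneg _⟩ ⟨c, hc⟩ le_rfl

lemma dist_proj_sq (S : Submodule ℂ E) [S.HasOrthogonalProjection] (y : E) :
    ‖y - (S.orthogonalProjectionOnto y : E)‖ ^ 2 = ‖y‖ ^ 2 - ‖(S.orthogonalProjectionOnto y : E)‖ ^ 2 := by
  have h := Submodule.norm_sq_eq_add_norm_sq_projection y S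
  have h2 : ((Sᗮ.orthogonalProjectionOnto y : Sᗮ) : E) = y - S.orthogonalProjectionOnto y := by
    exact Subtype.ext_iff.mp (Submodule.orthogonalProjectionOnto_orthogonal y)
  have h3 : ‖Sᗮ.orthogonalProjectionOnto y‖ = ‖y - (S.orthogonalProjectionOnto y : E)‖ := by
    rw [← h2]; rfl
  rw [h3] at h
  have h4 : ‖S.orthogonalProjectionOnto y‖ = ‖(S.orthogonalProjectionOnto y : E)‖ := rfl
  rw [h4] at h
  linarith

lemma proj_norm_le (S : Submodule ℂ E) [S.HasOrthogonalProjection] (y : E) :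
    ‖(S.orthogonalProjectionOnto y : E)‖ ≤ ‖y‖ := by
  have := S.orthogonalProjectionOnto.le_opNorm y
  calc ‖(S.orthogonalProjectionOnto y : E)‖ = ‖S.orthogonalProjectionOnto y‖ := rfl
    _ ≤ ‖S.orthogonalProjectionOnto‖ * ‖y‖ := this
    _ ≤ 1 * ‖y‖ := by gcongr; exacts [S.orthogonalProjectionOnto_norm_le]
    _ = ‖y‖ := one_mul _
end Proj

lemma weights_lemma (μ k : ℕ) (hk : k ≤ μ) (σ w : ℕ → ℝ)
    (hσ_sorted : ∀ i j : ℕ, i ≤ j → j < μ → σ j ≤ σ i)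
    (hσ_nonneg : ∀ i : ℕ, i < μ → 0 ≤ σ i)
    (hw0 : ∀ i, 0 ≤ w i) (hw1 : ∀ i, w i ≤ 1)
    (hsum : ∑ i ∈ Finset.range μ, w i ≤ k) :
    ∑ i ∈ Finset.Ico k μ, σ i ^ 2 ≤ ∑ i ∈ Finset.range μ, σ i ^ 2 * (1 - w i) := by
  rcases eq_or_lt_of_le hk with rfl | hkμ
  · simp only [Finset.Ico_self, Finset.sum_empty]
    exact Finset.sum_nonneg fun i _ => mul_nonneg (sq_nonneg _) (by linarith [hw1 i])
  · set t := σ k ^ 2 with ht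
    have htnn : 0 ≤ t := sq_nonneg _
    have hsplit : ∑ i ∈ Finset.range μ, σ i ^ 2 * (1 - w i)
        = ∑ i ∈ Finset.Ico 0 k, σ i ^ 2 * (1 - w i)
          + ∑ i ∈ Finset.Ico k μ, σ i ^ 2 * (1 - w i) := by
      rw [Finset.range_eq_Ico, ← Finset.sum_Ico_consecutive _ (Nat.zero_le k) hk]
    have hsplitw : ∑ i ∈ Finset.range μ, w i
        = ∑ i ∈ Finset.Ico 0 k, w i + ∑ i ∈ Finset.Ico k μ, w i := by
      rw [Finset.range_eq_Ico, ← Finset.sum_Ico_consecutive _ (Nat.zero_le k) hk]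
    have h1 : ∑ i ∈ Finset.Ico 0 k, t * (1 - w i) ≤ ∑ i ∈ Finset.Ico 0 k, σ i ^ 2 * (1 - w i) := by
      refine Finset.sum_le_sum fun i hi => ?_
      rw [Finset.mem_Ico] at hi
      have hik : i < k := hi.2
      have : σ k ≤ σ i := hσ_sorted i k (le_of_lt hik) hkμ
      have h0 : 0 ≤ σ k := hσ_nonneg k hkμ
      have : t ≤ σ i ^ 2 := by rw [ht]; exact pow_le_pow_left₀ h0 this 2
      nlinarith [hw1 i]
    have h2 : ∀ i ∈ Finset.Ico k μ, σ i ^ 2 * w i ≤ t * w i := by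
      intro i hi
      rw [Finset.mem_Ico] at hi
      have : σ i ≤ σ k := hσ_sorted k i hi.1 hi.2
      have h0 : 0 ≤ σ i := hσ_nonneg i hi.2
      have : σ i ^ 2 ≤ t := by rw [ht]; exact pow_le_pow_left₀ h0 this 2
      nlinarith [hw0 i]
    have key : ∑ i ∈ Finset.Ico k μ, σ i ^ 2 * w i
        ≤ ∑ i ∈ Finset.Ico 0 k, σ i ^ 2 * (1 - w i) := by
      calc ∑ i ∈ Finset.Ico k μ, σ i ^ 2 * w i ≤ ∑ i ∈ Finset.Ico k μ, t * w i :=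
            Finset.sum_le_sum h2
        _ ≤ ∑ i ∈ Finset.Ico 0 k, t * (1 - w i) := by
            have e1 : ∑ i ∈ Finset.Ico k μ, t * w i = t * ∑ i ∈ Finset.Ico k μ, w i := by
              rw [Finset.mul_sum]
            have e2 : ∑ i ∈ Finset.Ico 0 k, t * (1 - w i)
                = t * (k - ∑ i ∈ Finset.Ico 0 k, w i) := by
              simp_rw [mul_sub, mul_one]
              rw [Finset.sum_sub_distrib, Finset.sum_const, Nat.card_Ico, Nat.sub_zero,
                nsmul_eq_mul, ← Finset.mul_sum]
              ring
            rw [e1, e2]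
            have : ∑ i ∈ Finset.Ico k μ, w i ≤ k - ∑ i ∈ Finset.Ico 0 k, w i := by
              have := hsplitw ▸ hsum; linarith
            exact mul_le_mul_of_nonneg_left this htnn
        _ ≤ ∑ i ∈ Finset.Ico 0 k, σ i ^ 2 * (1 - w i) := h1
    rw [hsplit]
    have expand : ∑ i ∈ Finset.Ico k μ, σ i ^ 2 * (1 - w i)
        = ∑ i ∈ Finset.Ico k μ, σ i ^ 2 - ∑ i ∈ Finset.Ico k μ, σ i ^ 2 * w i := by
      rw [← Finset.sum_sub_distrib]; congr 1; ext i; ring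
    linarith [expand, key]


lemma key_diag (m n k : ℕ) (σ : ℕ → ℝ)
    (hσ_sorted : ∀ i j : ℕ, i ≤ j → j < min m n → σ j ≤ σ i)
    (hσ_nonneg : ∀ i : ℕ, i < min m n → 0 ≤ σ i)
    (hk : k ≤ min m n)
    (C : Matrix (Fin m) (Fin n) ℂ) (hC : C.rank ≤ k) :
    ∑ i ∈ Finset.Ico k (min m n), σ i ^ 2 ≤
      sumSq ((Matrix.of fun (i : Fin m) (j : Fin n) =>
        if (i : ℕ) = (j : ℕ) then ((σ (i : ℕ) : ℝ) : ℂ) else 0) - C) := by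
  set μ := min m n with hμ
  set D : Matrix (Fin m) (Fin n) ℂ := Matrix.of fun (i : Fin m) (j : Fin n) =>
    if (i : ℕ) = (j : ℕ) then ((σ (i : ℕ) : ℝ) : ℂ) else 0 with hD
  let eqv : (Fin m → ℂ) ≃ₗ[ℂ] EuclideanSpace ℂ (Fin m) :=
    (WithLp.linearEquiv 2 ℂ (Fin m → ℂ)).symm
  let col : Matrix (Fin m) (Fin n) ℂ → Fin n → EuclideanSpace ℂ (Fin m) :=
    fun A j => eqv (fun i => A i j)
  have hcolnorm : ∀ (A : Matrix (Fin m) (Fin n) ℂ) (j : Fin n),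
      ‖col A j‖ ^ 2 = ∑ i, ‖A i j‖ ^ 2 := by
    intro A j
    rw [PiLp.norm_sq_eq_of_L2]
    exact Finset.sum_congr rfl fun i _ => rfl
  have hsumcol : sumSq (D - C) = ∑ j, ‖col (D - C) j‖ ^ 2 := by
    rw [sumSq, Finset.sum_comm]
    exact Finset.sum_congr rfl fun j _ => (hcolnorm _ j).symm
  set S : Submodule ℂ (EuclideanSpace ℂ (Fin m)) :=
    (Submodule.span ℂ (Set.range Cᵀ)).map
      (eqv : (Fin m → ℂ) →ₗ[ℂ] EuclideanSpace ℂ (Fin m)) with hS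
  have hrankS : Module.finrank ℂ S ≤ k := by
    rw [hS, LinearEquiv.finrank_map_eq]
    rw [Matrix.rank_eq_finrank_span_cols] at hC
    exact hC
  set b := stdOrthonormalBasis ℂ S with hb
  set P := S.orthogonalProjectionOnto with hP
  set w : Fin m → ℝ := fun i => ‖(P (EuclideanSpace.single i 1) : EuclideanSpace ℂ (Fin m))‖ ^ 2
    with hw
  set w' : ℕ → ℝ := fun i => if h : i < m then w ⟨i, h⟩ else 0 with hw'
  have hw0 : ∀ i, 0 ≤ w' i := by
    intro i; rw [hw']; dsimp only; split
    · exact sq_nonneg _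
    · exact le_refl 0
  have hw1 : ∀ i, w' i ≤ 1 := by
    intro i; rw [hw']; dsimp only; split
    · rename_i h
      have h1 : ‖(P (EuclideanSpace.single (⟨i, h⟩ : Fin m) 1) : EuclideanSpace ℂ (Fin m))‖ ≤ 1 := by
        calc ‖(P (EuclideanSpace.single (⟨i, h⟩ : Fin m) 1) : EuclideanSpace ℂ (Fin m))‖
            ≤ ‖EuclideanSpace.single (⟨i, h⟩ : Fin m) (1:ℂ)‖ := proj_norm_le _ _
          _ = 1 := by rw [EuclideanSpace.norm_single]; simp
      calc w ⟨i, h⟩ = ‖(P (EuclideanSpace.single (⟨i, h⟩ : Fin m) 1) : EuclideanSpace ℂ (Fin m))‖^2 := rfl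
        _ ≤ 1 ^ 2 := pow_le_pow_left₀ (norm_nonneg _) h1 2
        _ = 1 := one_pow 2
    · exact zero_le_one
  have hsumw : ∑ i ∈ Finset.range μ, w' i ≤ (k : ℝ) := by
    have step1 : ∑ i ∈ Finset.range μ, w' i ≤ ∑ i ∈ Finset.range m, w' i := by
      apply Finset.sum_le_sum_of_subset_of_nonneg
      · exact Finset.range_subset_range.2 (min_le_left m n)
      · intro i _ _; exact hw0 i
    have step2 : ∑ i ∈ Finset.range m, w' i = ∑ i : Fin m, w i := by
      rw [← Fin.sum_univ_eq_sum_range]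
      refine Finset.sum_congr rfl fun i _ => ?_
      rw [hw']; dsimp only
      rw [dif_pos i.isLt]
    have step3 : ∑ i : Fin m, w i = (Module.finrank ℂ S : ℝ) := by
      have e1 : ∀ i : Fin m, w i
          = ∑ l, ‖(⟪(b l : EuclideanSpace ℂ (Fin m)), EuclideanSpace.single i 1⟫ : ℂ)‖ ^ 2 :=
        fun i => proj_normSq S b _
      rw [Finset.sum_congr rfl fun i _ => e1 i, Finset.sum_comm]
      have e2 : ∀ l, ∑ i : Fin m,
          ‖(⟪(b l : EuclideanSpace ℂ (Fin m)), EuclideanSpace.single i 1⟫ : ℂ)‖ ^ 2 = 1 := by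
        intro l
        have e3 : ∀ i : Fin m,
            ‖(⟪(b l : EuclideanSpace ℂ (Fin m)), EuclideanSpace.single i 1⟫ : ℂ)‖ ^ 2
            = ‖(b l : EuclideanSpace ℂ (Fin m)) i‖ ^ 2 := by
          intro i
          rw [EuclideanSpace.inner_single_right]
          simp [RCLike.norm_conj]
        rw [Finset.sum_congr rfl fun i _ => e3 i, ← PiLp.norm_sq_eq_of_L2]
        rw [Submodule.norm_coe, b.orthonormal.1 l, one_pow]
      rw [Finset.sum_congr rfl fun l _ => e2 l]
      simp
    rw [step2, step3] at step1
    calc ∑ i ∈ Finset.range μ, w' i ≤ (Module.finrank ℂ S : ℝ) := step1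
      _ ≤ (k : ℝ) := by exact_mod_cast hrankS
  have percol : ∀ j : Fin n, (j : ℕ) < μ →
      σ (j : ℕ) ^ 2 * (1 - w' (j : ℕ)) ≤ ‖col (D - C) j‖ ^ 2 := by
    intro j hj
    have hjm : (j : ℕ) < m := lt_of_lt_of_le hj (min_le_left m n)
    set i₀ : Fin m := ⟨(j : ℕ), hjm⟩ with hi₀
    have hfun : (fun i => D i j)
        = ((σ (j : ℕ) : ℝ) : ℂ) • (Pi.single i₀ (1 : ℂ) : Fin m → ℂ) := by
      funext i
      rw [hD]
      simp only [Matrix.of_apply, Pi.smul_apply, Pi.single_apply, smul_eq_mul]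
      by_cases h : (i : ℕ) = (j : ℕ)
      · rw [if_pos h, if_pos (by rw [hi₀]; exact Fin.ext h), h, mul_one]
      · rw [if_neg h, if_neg (by rw [hi₀]; exact fun hh => h (congrArg Fin.val hh)), mul_zero]
    have hsingle : EuclideanSpace.single i₀ (1:ℂ) = eqv (Pi.single i₀ (1:ℂ) : Fin m → ℂ) := rfl
    have hyd : col D j = ((σ (j : ℕ) : ℝ) : ℂ) • EuclideanSpace.single i₀ (1 : ℂ) := by
      show eqv (fun i => D i j) = _
      rw [hfun, _root_.map_smul, hsingle]
    have hcmem : col C j ∈ S := by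
      rw [hS]
      exact Submodule.mem_map_of_mem (Submodule.subset_span ⟨j, rfl⟩)
    have hsub : col (D - C) j = col D j - col C j := by
      show eqv _ = eqv _ - eqv _
      rw [← map_sub]
      rfl
    have step1 : ‖col D j - (P (col D j) : EuclideanSpace ℂ (Fin m))‖ ≤ ‖col (D - C) j‖ := by
      rw [hsub]; exact dist_proj_le S (col D j) (col C j) hcmem
    have step2 : ‖col D j - (P (col D j) : EuclideanSpace ℂ (Fin m))‖ ^ 2 ≤ ‖col (D - C) j‖ ^ 2 :=
      pow_le_pow_left₀ (norm_nonneg _) step1 2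
    have step3 : ‖col D j - (P (col D j) : EuclideanSpace ℂ (Fin m))‖ ^ 2
        = σ (j:ℕ) ^ 2 * (1 - w' (j:ℕ)) := by
      rw [dist_proj_sq]
      have hnormD : ‖col D j‖ ^ 2 = σ (j:ℕ) ^ 2 := by
        rw [hyd, norm_smul, EuclideanSpace.norm_single, norm_one, mul_one, Complex.norm_real,
          Real.norm_eq_abs, sq_abs]
      have hnormP : ‖(P (col D j) : EuclideanSpace ℂ (Fin m))‖ ^ 2 = σ (j:ℕ) ^ 2 * w i₀ := by
        rw [hyd, _root_.map_smul]
        have hco : ((((σ (j:ℕ) : ℝ):ℂ) • P (EuclideanSpace.single i₀ 1) : S)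
            : EuclideanSpace ℂ (Fin m))
            = ((σ (j:ℕ) : ℝ):ℂ) • (P (EuclideanSpace.single i₀ 1) : EuclideanSpace ℂ (Fin m)) :=
          rfl
        rw [hco, norm_smul, mul_pow, Complex.norm_real, Real.norm_eq_abs, sq_abs]
      rw [hnormD, hnormP]
      have hw'j : w' (j:ℕ) = w i₀ := by rw [hw']; dsimp only; rw [dif_pos hjm]
      rw [hw'j]; ring
    rw [← step3]; exact step2
  have final1 : ∑ j : Fin n, (if (j:ℕ) < μ then σ (j:ℕ) ^ 2 * (1 - w' (j:ℕ)) else 0)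
      ≤ ∑ j, ‖col (D - C) j‖ ^ 2 := by
    refine Finset.sum_le_sum fun j _ => ?_
    split
    · exact percol j (by assumption)
    · exact sq_nonneg _
  have final2 : ∑ j : Fin n, (if (j:ℕ) < μ then σ (j:ℕ) ^ 2 * (1 - w' (j:ℕ)) else 0)
      = ∑ i ∈ Finset.range μ, σ i ^ 2 * (1 - w' i) := by
    rw [Fin.sum_univ_eq_sum_range (fun i => if i < μ then σ i ^ 2 * (1 - w' i) else 0) n]
    rw [← Finset.sum_filter]
    congr 1
    ext i
    simp only [Finset.mem_filter, Finset.mem_range]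
    constructor
    · rintro ⟨_, h⟩; exact h
    · intro h; exact ⟨lt_of_lt_of_le h (min_le_right m n), h⟩
  rw [hsumcol]
  calc ∑ i ∈ Finset.Ico k μ, σ i ^ 2
      ≤ ∑ i ∈ Finset.range μ, σ i ^ 2 * (1 - w' i) :=
        weights_lemma μ k hk σ w' hσ_sorted hσ_nonneg hw0 hw1 hsumw
    _ = ∑ j : Fin n, (if (j:ℕ) < μ then σ (j:ℕ) ^ 2 * (1 - w' (j:ℕ)) else 0) := final2.symm
    _ ≤ ∑ j, ‖col (D - C) j‖ ^ 2 := final1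


/-- **Eckart–Young theorem (Frobenius norm).** Let `M = U D Vᴴ` be a singular value
decomposition with `U, V` unitary, `D_{ij} = σ_i` if `i = j` and `0` otherwise, and
`σ_0 ≥ σ_1 ≥ ⋯ ≥ σ_{min(m,n)−1} ≥ 0` (0-indexed). Then every matrix `B` of rank at
most `k` satisfies `‖M − B‖_F² ≥ Σ_{i ≥ k} σ_i²`; in particular the rank-`k`
truncated SVD `M̃ = U D̃ Vᴴ` is a closest rank-`k` matrix to `M` in the Frobenius
norm. -/
theorem eckart_young_frobenius
    (m n : ℕ) (hm : 1 ≤ m) (hn : 1 ≤ n)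
    (M : Matrix (Fin m) (Fin n) ℂ)
    (U : Matrix (Fin m) (Fin m) ℂ) (V : Matrix (Fin n) (Fin n) ℂ)
    (hU : Uᴴ * U = 1) (hV : Vᴴ * V = 1)
    (σ : ℕ → ℝ)
    (hσ_sorted : ∀ i j : ℕ, i ≤ j → j < min m n → σ j ≤ σ i)
    (hσ_nonneg : ∀ i : ℕ, i < min m n → 0 ≤ σ i)
    (hM : M = U * Matrix.of (fun (i : Fin m) (j : Fin n) =>
        if (i : ℕ) = (j : ℕ) then ((σ (i : ℕ) : ℝ) : ℂ) else 0) * Vᴴ)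
    (k : ℕ) (hk : k ≤ min m n) :
    (∀ B : Matrix (Fin m) (Fin n) ℂ, B.rank ≤ k →
        ∑ i ∈ Finset.Ico k (min m n), σ i ^ 2 ≤ frobNorm (M - B) ^ 2) ∧
    (∀ B : Matrix (Fin m) (Fin n) ℂ, B.rank ≤ k →
        frobNorm (M - U * Matrix.of (fun (i : Fin m) (j : Fin n) =>
            if (i : ℕ) = (j : ℕ) ∧ (i : ℕ) < k then ((σ (i : ℕ) : ℝ) : ℂ) else 0) * Vᴴ)
          ≤ frobNorm (M - B)) := by
  have hUU : U * Uᴴ = 1 := mul_eq_one_comm.mp hU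
  have hVV : V * Vᴴ = 1 := mul_eq_one_comm.mp hV
  set D : Matrix (Fin m) (Fin n) ℂ := Matrix.of (fun (i : Fin m) (j : Fin n) =>
      if (i : ℕ) = (j : ℕ) then ((σ (i : ℕ) : ℝ) : ℂ) else 0) with hDdef
  set Dt : Matrix (Fin m) (Fin n) ℂ := Matrix.of (fun (i : Fin m) (j : Fin n) =>
      if (i : ℕ) = (j : ℕ) ∧ (i : ℕ) < k then ((σ (i : ℕ) : ℝ) : ℂ) else 0) with hDtdef
  -- part 1 at sumSq level
  have part1' : ∀ B : Matrix (Fin m) (Fin n) ℂ, B.rank ≤ k →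
      ∑ i ∈ Finset.Ico k (min m n), σ i ^ 2 ≤ sumSq (M - B) := by
    intro B hB
    have hfact : M - B = U * (D - Uᴴ * B * V) * Vᴴ := by
      rw [hM, Matrix.mul_sub, Matrix.sub_mul]
      congr 1
      symm
      calc U * (Uᴴ * B * V) * Vᴴ = (U * Uᴴ) * B * (V * Vᴴ) := by
            simp only [Matrix.mul_assoc]
        _ = B := by rw [hUU, hVV, Matrix.one_mul, Matrix.mul_one]
    have hrank : (Uᴴ * B * V).rank ≤ k := by
      calc (Uᴴ * B * V).rank = (Uᴴ * (B * V)).rank := by rw [Matrix.mul_assoc]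
        _ ≤ (B * V).rank := Matrix.rank_mul_le_right _ _
        _ ≤ B.rank := Matrix.rank_mul_le_left _ _
        _ ≤ k := hB
    calc ∑ i ∈ Finset.Ico k (min m n), σ i ^ 2
        ≤ sumSq (D - Uᴴ * B * V) :=
          key_diag m n k σ hσ_sorted hσ_nonneg hk _ hrank
      _ = sumSq (U * (D - Uᴴ * B * V) * Vᴴ) := (sumSq_unitary U V hU hV _).symm
      _ = sumSq (M - B) := by rw [hfact]
  have hfrobsq : ∀ A : Matrix (Fin m) (Fin n) ℂ, frobNorm A ^ 2 = sumSq A := by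
    intro A
    rw [frobNorm_eq_sqrt_sumSq, Real.sq_sqrt (sumSq_nonneg A)]
  constructor
  · intro B hB
    rw [hfrobsq]
    exact part1' B hB
  · intro B hB
    -- sumSq of the truncation residual
    have hMt : M - U * Dt * Vᴴ = U * (D - Dt) * Vᴴ := by
      rw [hM, Matrix.mul_sub, Matrix.sub_mul]
    have hsum_trunc : sumSq (M - U * Dt * Vᴴ) = ∑ i ∈ Finset.Ico k (min m n), σ i ^ 2 := by
      rw [hMt, sumSq_unitary U V hU hV]
      have hentry : (D - Dt) = Matrix.of (fun (i : Fin m) (j : Fin n) =>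
          if (i : ℕ) = (j : ℕ) ∧ k ≤ (i : ℕ) then ((σ (i : ℕ) : ℝ) : ℂ) else 0) := by
        ext i j
        rw [hDdef, hDtdef]
        simp only [Matrix.sub_apply, Matrix.of_apply]
        by_cases hij : (i : ℕ) = (j : ℕ)
        · by_cases hik : (i : ℕ) < k
          · rw [if_pos hij, if_pos ⟨hij, hik⟩, if_neg (by push_neg; intro; omega), sub_self]
          · rw [if_pos hij, if_neg (by push_neg; intro; omega),
              if_pos ⟨hij, Nat.le_of_not_lt hik⟩, sub_zero]
        · rw [if_neg hij, if_neg (by push_neg; intro h; exact absurd h hij),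
            if_neg (by push_neg; intro h; exact absurd h hij), sub_zero]
      rw [hentry, sumSq]
      have inner_eq : ∀ i : Fin m,
          (∑ j : Fin n, ‖(Matrix.of (fun (i : Fin m) (j : Fin n) =>
            if (i : ℕ) = (j : ℕ) ∧ k ≤ (i : ℕ) then ((σ (i : ℕ) : ℝ) : ℂ) else 0)) i j‖ ^ 2)
          = if (i : ℕ) < n ∧ k ≤ (i : ℕ) then σ (i : ℕ) ^ 2 else 0 := by
        intro i
        simp only [Matrix.of_apply]
        by_cases hin : (i : ℕ) < n
        · rw [Finset.sum_eq_single (⟨(i : ℕ), hin⟩ : Fin n)]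
          · by_cases hik : k ≤ (i : ℕ)
            · rw [if_pos ⟨rfl, hik⟩, if_pos ⟨hin, hik⟩, Complex.norm_real,
                Real.norm_eq_abs, sq_abs]
            · rw [if_neg (fun h => hik h.2), if_neg (fun h => hik h.2), norm_zero]
              norm_num
          · intro j _ hj
            rw [if_neg, norm_zero]
            · norm_num
            · rintro ⟨h1, _⟩
              exact hj (Fin.ext h1.symm)
          · intro h
            exact absurd (Finset.mem_univ _) h
        · rw [if_neg (fun h => hin h.1)]
          refine Finset.sum_eq_zero fun j _ => ?_
          rw [if_neg, norm_zero]
          · norm_num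
          · rintro ⟨h1, _⟩
            exact hin (h1 ▸ j.isLt)
      rw [Finset.sum_congr rfl fun i _ => inner_eq i]
      rw [Fin.sum_univ_eq_sum_range (fun i => if i < n ∧ k ≤ i then σ i ^ 2 else 0) m]
      rw [← Finset.sum_filter]
      congr 1
      ext i
      simp only [Finset.mem_filter, Finset.mem_range, Finset.mem_Ico, lt_min_iff]
      omega
    have h1 : frobNorm (M - U * Dt * Vᴴ) = Real.sqrt (∑ i ∈ Finset.Ico k (min m n), σ i ^ 2) := by
      rw [frobNorm_eq_sqrt_sumSq, hsum_trunc]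
    rw [h1, frobNorm_eq_sqrt_sumSq]
    exact Real.sqrt_le_sqrt (part1' B hB)
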